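/- Let G be a countable group acting by measurable maps on a measurable space (Z, 𝔐), let ν be a G-invariant measure on Z, let F be a fundamental domain, and let ν_F be the measure ν_F(A) = ∑_{B∈𝔉₁} (1/|B|)·ν(A ∩ Z_B^F). Suppose φ : Z → Z is a measurable, ν-preserving map satisfying φ∘g = g∘φ for all g ∈ G. Then φ_*(ν_F)(A) = ν_F(A) for every G-invariant measurable set A ⊆ Z. -/

import Mathlib

set_option linter.unusedSectionVars false

open MeasureTheory
open scoped ENNReal

/-- `Z_B^F = {z ∈ Z : for all g ∈ G, g • z ∈ F ↔ g ∈ B}`. -/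
def fdCell {G Z : Type*} [SMul G Z] (F : Set Z) (B : Finset G) : Set Z :=
  {z | ∀ g : G, g • z ∈ F ↔ g ∈ B}

section Aux

variable {G Z : Type*} [Group G] [Countable G] [MulAction G Z] [MeasurableSpace Z]

lemma fdCell_measurableSet (hmeas : ∀ g : G, Measurable fun z : Z => g • z)
    {F : Set Z} (hFm : MeasurableSet F) (B : Finset G) :
    MeasurableSet (fdCell F B) := by
  classical
  have hrw : fdCell F B = ⋂ g : G,
      (if g ∈ B then (fun z : Z => g • z) ⁻¹' F else ((fun z : Z => g • z) ⁻¹' F)ᶜ) := by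
    ext z
    simp only [fdCell, Set.mem_setOf_eq, Set.mem_iInter]
    constructor
    · intro h g
      by_cases hg : g ∈ B
      · rw [if_pos hg]; exact (h g).2 hg
      · rw [if_neg hg]; exact fun hz => hg ((h g).1 hz)
    · intro h g
      have := h g
      by_cases hg : g ∈ B
      · rw [if_pos hg] at this; exact ⟨fun _ => hg, fun _ => this⟩
      · rw [if_neg hg] at this; exact ⟨fun hz => absurd hz this, fun hb => absurd hb hg⟩
  rw [hrw]
  refine MeasurableSet.iInter fun g => ?_
  by_cases hg : g ∈ B
  · rw [if_pos hg]; exact (hmeas g) hFm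
  · rw [if_neg hg]; exact ((hmeas g) hFm).compl

lemma fdCell_disjoint {F : Set Z} {B C : Finset G} (h : B ≠ C) :
    Disjoint (fdCell F B) (fdCell F C) := by
  rw [Set.disjoint_left]
  intro z hB hC
  exact h (Finset.ext fun g => ((hB g).symm.trans (hC g)))

lemma fdCell_iUnion {F : Set Z} (hFfin : ∀ z ∈ F, {g : G | g • z ∈ F}.Finite) :
    ⋃ C : Finset G, fdCell F C = Set.univ := by
  refine Set.eq_univ_of_forall fun z => ?_
  have hfin : {g : G | g • z ∈ F}.Finite := by
    by_cases hne : ∃ g₀ : G, g₀ • z ∈ F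
    · obtain ⟨g₀, hg₀⟩ := hne
      have h1 : {g : G | g • z ∈ F} = (fun h => h * g₀) '' {h : G | h • (g₀ • z) ∈ F} := by
        ext g
        simp only [Set.mem_setOf_eq, Set.mem_image]
        constructor
        · intro hg
          exact ⟨g * g₀⁻¹, by simpa [smul_smul] using hg, by group⟩
        · rintro ⟨h, hh, rfl⟩
          simpa [smul_smul] using hh
      rw [h1]
      exact ((hFfin _ hg₀).image _)
    · push_neg at hne
      have : {g : G | g • z ∈ F} = ∅ := by
        ext g; simp [hne g]
      rw [this]; exact Set.finite_empty
  refine Set.mem_iUnion.2 ⟨hfin.toFinset, fun g => ?_⟩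
  simp [Set.Finite.mem_toFinset]

lemma fdCell_smul_preimage [DecidableEq G] {F : Set Z} (h : G) (B : Finset G) :
    (fun z : Z => h • z) ⁻¹' fdCell F B = fdCell F (B.image (· * h)) := by
  ext z
  simp only [Set.mem_preimage, fdCell, Set.mem_setOf_eq]
  constructor
  · intro hz g
    rw [Finset.mem_image]
    constructor
    · intro hg
      exact ⟨g * h⁻¹, (hz (g * h⁻¹)).1 (by simpa [smul_smul, mul_assoc] using hg), by group⟩
    · rintro ⟨b, hb, rfl⟩
      have := (hz b).2 hb
      simpa [smul_smul] using this
  · intro hz g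
    have h2 := hz (g * h)
    rw [Finset.mem_image] at h2
    have hmem : (g * h) • z = g • h • z := by rw [smul_smul]
    constructor
    · intro hg
      obtain ⟨b, hb, hbe⟩ := h2.1 (by rw [hmem]; exact hg)
      have hbg : b = g := mul_right_cancel hbe
      rwa [← hbg]
    · intro hg
      have := h2.2 ⟨g, hg, rfl⟩
      rw [hmem] at this; exact this

lemma fdCell_empty_null (ν : Measure Z) {F : Set Z}
    (hFfull : ν ((⋃ g : G, (fun z : Z => g • z) '' F)ᶜ) = 0) :
    ν (fdCell F (∅ : Finset G)) = 0 := by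
  refine measure_mono_null ?_ hFfull
  intro z hz
  simp only [Set.mem_compl_iff, Set.mem_iUnion]
  intro hmem
  obtain ⟨g, w, hw, hwz⟩ := hmem
  have : g⁻¹ • z ∈ F := by rw [← hwz]; simpa using hw
  have := (hz g⁻¹).1 this
  simp at this

lemma measure_eq_tsum_fdCell (hmeas : ∀ g : G, Measurable fun z : Z => g • z)
    (ν : Measure Z) {F' : Set Z} (hF'm : MeasurableSet F')
    (hF'fin : ∀ z ∈ F', {g : G | g • z ∈ F'}.Finite)
    {X : Set Z} (hX : MeasurableSet X) :
    ν X = ∑' C : Finset G, ν (X ∩ fdCell F' C) := by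
  have hX' : X = ⋃ C : Finset G, (X ∩ fdCell F' C) := by
    rw [← Set.inter_iUnion, fdCell_iUnion hF'fin, Set.inter_univ]
  nth_rewrite 1 [hX']
  exact measure_iUnion
    (fun B C hBC => (fdCell_disjoint hBC).mono inf_le_right inf_le_right)
    (fun C => hX.inter (fdCell_measurableSet hmeas hF'm C))

open Classical in
lemma helper_tsum (hmeas : ∀ g : G, Measurable fun z : Z => g • z) (ν : Measure Z)
    {F F' : Set Z} (hFm : MeasurableSet F) (hF'm : MeasurableSet F')
    (hF'full : ν ((⋃ g : G, (fun z : Z => g • z) '' F')ᶜ) = 0)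
    (hF'fin : ∀ z ∈ F', {g : G | g • z ∈ F'}.Finite)
    {S : Set Z} (hSm : MeasurableSet S) :
    ∑' B : {B : Finset G // (1 : G) ∈ B}, ((B.1.card : ℝ≥0∞))⁻¹ * ν (S ∩ fdCell F B.1)
      = ∑' p : Finset G × Finset G × G,
          if (1 : G) ∈ p.1 ∧ p.2.2 ∈ p.2.1 then
            ((p.1.card : ℝ≥0∞))⁻¹ * ((p.2.1.card : ℝ≥0∞))⁻¹ *
              ν (S ∩ fdCell F p.1 ∩ fdCell F' p.2.1)
          else 0 := by
  classical
  have key : ∀ B : Finset G,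
      (if (1 : G) ∈ B then ((B.card : ℝ≥0∞))⁻¹ * ν (S ∩ fdCell F B) else 0)
        = ∑' C : Finset G, ∑' h : G,
            if (1 : G) ∈ B ∧ h ∈ C then
              ((B.card : ℝ≥0∞))⁻¹ * ((C.card : ℝ≥0∞))⁻¹ * ν (S ∩ fdCell F B ∩ fdCell F' C)
            else 0 := by
    intro B
    by_cases hB : (1 : G) ∈ B
    · simp only [hB, if_true, true_and]
      rw [measure_eq_tsum_fdCell hmeas ν hF'm hF'fin
        (hSm.inter (fdCell_measurableSet hmeas hFm B)), ← ENNReal.tsum_mul_left]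
      refine tsum_congr fun C => ?_
      rcases Finset.eq_empty_or_nonempty C with rfl | hC
      · have h0 : ν (S ∩ fdCell F B ∩ fdCell F' ∅) = 0 :=
          measure_mono_null Set.inter_subset_right (fdCell_empty_null ν hF'full)
        simp [h0]
      · have h1 : (∑' h : G, if h ∈ C then
            ((B.card : ℝ≥0∞))⁻¹ * ((C.card : ℝ≥0∞))⁻¹ * ν (S ∩ fdCell F B ∩ fdCell F' C)
            else 0)
            = ∑ h ∈ C, (if h ∈ C then
              ((B.card : ℝ≥0∞))⁻¹ * ((C.card : ℝ≥0∞))⁻¹ * ν (S ∩ fdCell F B ∩ fdCell F' C)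
              else 0) :=
          tsum_eq_sum fun h hh => if_neg hh
        have h2 : (∑ h ∈ C, (if h ∈ C then
              ((B.card : ℝ≥0∞))⁻¹ * ((C.card : ℝ≥0∞))⁻¹ * ν (S ∩ fdCell F B ∩ fdCell F' C)
              else 0))
            = (C.card : ℝ≥0∞) * (((B.card : ℝ≥0∞))⁻¹ * ((C.card : ℝ≥0∞))⁻¹ *
                ν (S ∩ fdCell F B ∩ fdCell F' C)) := by
          rw [Finset.sum_congr rfl (fun h hh => if_pos hh), Finset.sum_const, nsmul_eq_mul]
        rw [h1, h2]
        have hcard : ((C.card : ℝ≥0∞)) * ((C.card : ℝ≥0∞))⁻¹ = 1 :=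
          ENNReal.mul_inv_cancel (by exact_mod_cast hC.card_pos.ne') (by simp)
        calc ((B.card : ℝ≥0∞))⁻¹ * ν (S ∩ fdCell F B ∩ fdCell F' C)
            = ((C.card : ℝ≥0∞) * ((C.card : ℝ≥0∞))⁻¹) *
              (((B.card : ℝ≥0∞))⁻¹ * ν (S ∩ fdCell F B ∩ fdCell F' C)) := by
              rw [hcard, one_mul]
          _ = (C.card : ℝ≥0∞) * (((B.card : ℝ≥0∞))⁻¹ * ((C.card : ℝ≥0∞))⁻¹ *
              ν (S ∩ fdCell F B ∩ fdCell F' C)) := by ring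
    · simp [hB]
  have hprod : (∑' p : Finset G × Finset G × G,
          if (1 : G) ∈ p.1 ∧ p.2.2 ∈ p.2.1 then
            ((p.1.card : ℝ≥0∞))⁻¹ * ((p.2.1.card : ℝ≥0∞))⁻¹ *
              ν (S ∩ fdCell F p.1 ∩ fdCell F' p.2.1)
          else 0)
      = ∑' B : Finset G, ∑' C : Finset G, ∑' h : G,
          if (1 : G) ∈ B ∧ h ∈ C then
            ((B.card : ℝ≥0∞))⁻¹ * ((C.card : ℝ≥0∞))⁻¹ * ν (S ∩ fdCell F B ∩ fdCell F' C)
          else 0 := by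
    rw [ENNReal.tsum_prod']
    exact tsum_congr fun B => ENNReal.tsum_prod'
  rw [hprod]
  calc ∑' B : {B : Finset G // (1 : G) ∈ B}, ((B.1.card : ℝ≥0∞))⁻¹ * ν (S ∩ fdCell F B.1)
      = ∑' B : Finset G,
          (if (1 : G) ∈ B then ((B.card : ℝ≥0∞))⁻¹ * ν (S ∩ fdCell F B) else 0) :=
        (tsum_subtype {B : Finset G | (1 : G) ∈ B}
            (fun B => ((B.card : ℝ≥0∞))⁻¹ * ν (S ∩ fdCell F B))).trans
          (tsum_congr fun B => Set.indicator_apply _ _ _)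
    _ = _ := tsum_congr key

end Aux

section Tri

variable {G : Type*} [Group G]

lemma image_mul_mul_inv [DecidableEq G] (s : Finset G) (a : G) :
    (s.image (· * a)).image (· * a⁻¹) = s := by
  rw [Finset.image_image]
  have h : ((· * a⁻¹) ∘ (· * a)) = (id : G → G) := by
    funext x; simp [Function.comp, mul_assoc]
  rw [h, Finset.image_id]

/-- The involutive rearrangement `(B, C, h) ↦ (C·h⁻¹, B·h⁻¹, h⁻¹)`. -/
def triEquiv (G : Type*) [Group G] [DecidableEq G] :
    (Finset G × Finset G × G) ≃ (Finset G × Finset G × G) where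
  toFun p := (p.2.1.image (· * p.2.2⁻¹), p.1.image (· * p.2.2⁻¹), p.2.2⁻¹)
  invFun p := (p.2.1.image (· * p.2.2⁻¹), p.1.image (· * p.2.2⁻¹), p.2.2⁻¹)
  left_inv := by
    rintro ⟨B, C, h⟩
    exact Prod.ext (image_mul_mul_inv B h⁻¹) (Prod.ext (image_mul_mul_inv C h⁻¹) (inv_inv h))
  right_inv := by
    rintro ⟨B, C, h⟩
    exact Prod.ext (image_mul_mul_inv B h⁻¹) (Prod.ext (image_mul_mul_inv C h⁻¹) (inv_inv h))

end Tri

section Aux2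

variable {G Z : Type*} [Group G] [Countable G] [MulAction G Z] [MeasurableSpace Z]

open Classical in
lemma core_indep (hmeas : ∀ g : G, Measurable fun z : Z => g • z) (ν : Measure Z)
    (hinv : ∀ (g : G) (A : Set Z), MeasurableSet A → ν ((fun z : Z => g • z) ⁻¹' A) = ν A)
    {F F' : Set Z} (hFm : MeasurableSet F) (hF'm : MeasurableSet F')
    (hFfull : ν ((⋃ g : G, (fun z : Z => g • z) '' F)ᶜ) = 0)
    (hF'full : ν ((⋃ g : G, (fun z : Z => g • z) '' F')ᶜ) = 0)
    (hFfin : ∀ z ∈ F, {g : G | g • z ∈ F}.Finite)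
    (hF'fin : ∀ z ∈ F', {g : G | g • z ∈ F'}.Finite)
    {S : Set Z} (hSm : MeasurableSet S)
    (hSinv : ∀ g : G, (fun z : Z => g • z) ⁻¹' S = S) :
    ∑' B : {B : Finset G // (1 : G) ∈ B}, ((B.1.card : ℝ≥0∞))⁻¹ * ν (S ∩ fdCell F B.1)
      = ∑' C : {C : Finset G // (1 : G) ∈ C}, ((C.1.card : ℝ≥0∞))⁻¹ * ν (S ∩ fdCell F' C.1) := by
  classical
  rw [helper_tsum hmeas ν hFm hF'm hF'full hF'fin hSm,
      helper_tsum hmeas ν hF'm hFm hFfull hFfin hSm]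
  rw [← Equiv.tsum_eq (triEquiv G) (fun p : Finset G × Finset G × G =>
      if (1 : G) ∈ p.1 ∧ p.2.2 ∈ p.2.1 then
        ((p.1.card : ℝ≥0∞))⁻¹ * ((p.2.1.card : ℝ≥0∞))⁻¹ *
          ν (S ∩ fdCell F' p.1 ∩ fdCell F p.2.1)
      else 0)]
  refine tsum_congr fun p => ?_
  obtain ⟨B, C, h⟩ := p
  simp only [triEquiv, Equiv.coe_fn_mk]
  have hm1 : ((1 : G) ∈ C.image (· * h⁻¹)) ↔ h ∈ C := by
    simp [Finset.mem_image, mul_inv_eq_one]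
  have hm2 : (h⁻¹ ∈ B.image (· * h⁻¹)) ↔ (1 : G) ∈ B := by
    simp [Finset.mem_image, mul_eq_right]
  by_cases hcond : (1 : G) ∈ B ∧ h ∈ C
  · rw [if_pos hcond]
    refine Eq.trans ?_ (if_pos (show (1 : G) ∈ C.image (· * h⁻¹) ∧ h⁻¹ ∈ B.image (· * h⁻¹) from
      ⟨hm1.2 hcond.2, hm2.2 hcond.1⟩)).symm
    have hcB : ((B.image (· * h⁻¹)).card : ℝ≥0∞) = (B.card : ℝ≥0∞) := by
      rw [Finset.card_image_of_injective _ (mul_left_injective h⁻¹)]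
    have hcC : ((C.image (· * h⁻¹)).card : ℝ≥0∞) = (C.card : ℝ≥0∞) := by
      rw [Finset.card_image_of_injective _ (mul_left_injective h⁻¹)]
    have hpre : (fun z : Z => h⁻¹ • z) ⁻¹' (S ∩ fdCell F' C ∩ fdCell F B)
        = S ∩ fdCell F' (C.image (· * h⁻¹)) ∩ fdCell F (B.image (· * h⁻¹)) := by
      rw [Set.preimage_inter, Set.preimage_inter, hSinv, fdCell_smul_preimage,
        fdCell_smul_preimage]
    have hval : ν (S ∩ fdCell F' (C.image (· * h⁻¹)) ∩ fdCell F (B.image (· * h⁻¹)))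
        = ν (S ∩ fdCell F B ∩ fdCell F' C) := by
      rw [← hpre, hinv h⁻¹ _ (((hSm.inter (fdCell_measurableSet hmeas hF'm C)).inter
        (fdCell_measurableSet hmeas hFm B))), Set.inter_right_comm]
    rw [hcB, hcC, hval]
    ring
  · rw [if_neg hcond]
    refine (if_neg ?_).symm
    intro hc
    exact hcond ⟨hm2.1 hc.2, hm1.1 hc.1⟩

end Aux2

theorem stmt14 {G Z : Type*} [Group G] [Countable G] [MulAction G Z] [MeasurableSpace Z]
    (hmeas : ∀ g : G, Measurable fun z : Z => g • z)
    (ν : Measure Z)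
    (hinv : ∀ (g : G) (A : Set Z), MeasurableSet A → ν ((fun z : Z => g • z) ⁻¹' A) = ν A)
    (F : Set Z) (hFm : MeasurableSet F)
    (hFfull : ν ((⋃ g : G, (fun z : Z => g • z) '' F)ᶜ) = 0)
    (hFfin : ∀ z ∈ F, {g : G | g • z ∈ F}.Finite)
    (φ : Z → Z) (hφm : Measurable φ)
    (hφν : ∀ A : Set Z, MeasurableSet A → ν (φ ⁻¹' A) = ν A)
    (hφg : ∀ (g : G) (z : Z), φ (g • z) = g • φ z)
    (A : Set Z) (hA : MeasurableSet A)
    (hAinv : ∀ g : G, (fun z : Z => g • z) '' A = A) :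
    ∑' B : {B : Finset G // (1 : G) ∈ B}, ((B.1.card : ℝ≥0∞))⁻¹ * ν (φ ⁻¹' A ∩ fdCell F B.1)
      = ∑' B : {B : Finset G // (1 : G) ∈ B}, ((B.1.card : ℝ≥0∞))⁻¹ * ν (A ∩ fdCell F B.1) := by
  classical
  set F' : Set Z := φ ⁻¹' F with hF'def
  have hF'm : MeasurableSet F' := hφm hFm
  have himg : ∀ (g : G) (X : Set Z),
      (fun z : Z => g • z) '' X = (fun z : Z => g⁻¹ • z) ⁻¹' X := by
    intro g X
    ext z
    constructor
    · rintro ⟨w, hw, rfl⟩; simpa using hw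
    · intro hz; exact ⟨g⁻¹ • z, hz, by simp⟩
  have hApre : ∀ g : G, (fun z : Z => g • z) ⁻¹' A = A := by
    intro g
    calc (fun z : Z => g • z) ⁻¹' A = (fun z : Z => (g⁻¹)⁻¹ • z) ⁻¹' A := by rw [inv_inv]
      _ = (fun z : Z => g⁻¹ • z) '' A := (himg g⁻¹ A).symm
      _ = A := hAinv g⁻¹
  have hSinvS : ∀ g : G, (fun z : Z => g • z) ⁻¹' (φ ⁻¹' A) = φ ⁻¹' A := by
    intro g
    have hcomm : (fun z : Z => g • z) ⁻¹' (φ ⁻¹' A)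
        = φ ⁻¹' ((fun z : Z => g • z) ⁻¹' A) := by
      ext z; simp [Set.mem_preimage, hφg]
    rw [hcomm, hApre]
  have hUm : MeasurableSet (⋃ g : G, (fun z : Z => g • z) '' F) := by
    refine MeasurableSet.iUnion fun g => ?_
    rw [himg]
    exact (hmeas g⁻¹) hFm
  have hUeq : (⋃ g : G, (fun z : Z => g • z) '' F')
      = φ ⁻¹' (⋃ g : G, (fun z : Z => g • z) '' F) := by
    rw [Set.preimage_iUnion]
    refine Set.iUnion_congr fun g => ?_
    ext z
    simp only [himg, Set.mem_preimage, hF'def, hφg]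
  have hF'full : ν ((⋃ g : G, (fun z : Z => g • z) '' F')ᶜ) = 0 := by
    rw [hUeq, ← Set.preimage_compl, hφν _ hUm.compl]
    exact hFfull
  have hF'fin : ∀ z ∈ F', {g : G | g • z ∈ F'}.Finite := by
    intro z hz
    have he : {g : G | g • z ∈ F'} = {g : G | g • φ z ∈ F} := by
      ext g; simp only [Set.mem_setOf_eq, hF'def, Set.mem_preimage, hφg]
    rw [he]
    exact hFfin (φ z) hz
  have hcell : ∀ C : Finset G, fdCell F' C = φ ⁻¹' fdCell F C := by
    intro C
    ext z
    simp only [fdCell, Set.mem_setOf_eq, Set.mem_preimage]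
    exact forall_congr' fun g => iff_congr (by rw [hF'def, Set.mem_preimage, hφg]) Iff.rfl
  calc ∑' B : {B : Finset G // (1 : G) ∈ B},
        ((B.1.card : ℝ≥0∞))⁻¹ * ν (φ ⁻¹' A ∩ fdCell F B.1)
      = ∑' C : {C : Finset G // (1 : G) ∈ C},
          ((C.1.card : ℝ≥0∞))⁻¹ * ν (φ ⁻¹' A ∩ fdCell F' C.1) :=
        core_indep hmeas ν hinv hFm hF'm hFfull hF'full hFfin hF'fin (hφm hA) hSinvS
    _ = ∑' B : {B : Finset G // (1 : G) ∈ B}, ((B.1.card : ℝ≥0∞))⁻¹ * ν (A ∩ fdCell F B.1) := by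
        refine tsum_congr fun C => ?_
        rw [hcell, ← Set.preimage_inter,
          hφν _ (hA.inter (fdCell_measurableSet hmeas hFm C.1))]
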